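/- Suppose γ_t·γ_a·t̄_a ≥ γ_t·H·Λ·d̄/V_d + γ_o·d̄ + 2·γ_v·d̄/V_d. Then the total cost function c attains its minimum over [0, L_x] at x_f = L_x, i.e., c(L_x) ≤ c(x) for all x ∈ [0, L_x] (the fully flexible route is optimal). -/
import Mathlib

/-- Result 1(b): if the access-cost saving per detour is at least the extra
riding, operating, and vehicle cost, the fully flexible route (x_f = L_x)
minimizes total cost. -/
theorem flexible_route_optimal
    (γt γa γw γo γv ta d H Vd Lx Tl : ℝ)
    (hγt : 0 < γt) (hγa : 0 < γa) (hγw : 0 < γw) (hγo : 0 < γo) (hγv : 0 < γv)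
    (hta : 0 < ta) (hd : 0 < d) (hH : 0 < H) (hVd : 0 < Vd) (hLx : 0 < Lx)
    (hTl : 0 ≤ Tl)
    (f : ℝ → ℝ) (hf : ContinuousOn f (Set.Icc 0 Lx))
    (hfpos : ∀ x ∈ Set.Icc (0:ℝ) Lx, 0 ≤ f x)
    (F : ℝ → ℝ) (hF : ∀ x, F x = ∫ t in (0:ℝ)..x, f t)
    (Λ : ℝ) (hΛ : Λ = F Lx)
    (c : ℝ → ℝ)
    (hc : ∀ x, c x =
      γt * γa * ta * (Λ - F x) + γt * γw * Λ * H / 2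
      + (γt / Vd) * (∫ u in (0:ℝ)..Lx, F u)
      + γt * H * d * (F x) ^ 2 / (2 * Vd)
      + γo * Lx / H + γo * d * F x
      + (2 * γv / H) * (Lx / Vd + H * d * F x / Vd + Tl))
    (hcond : γt * H * Λ * d / Vd + γo * d + 2 * γv * d / Vd ≤ γt * γa * ta) :
    ∀ x ∈ Set.Icc (0:ℝ) Lx, c Lx ≤ c x := by
  intro x hx
  obtain ⟨hx0, hxL⟩ := hx
  -- integrability on subintervals
  have hint1 : IntervalIntegrable f MeasureTheory.volume 0 x := by
    apply ContinuousOn.intervalIntegrable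
    apply hf.mono
    rw [Set.uIcc_of_le hx0]
    exact Set.Icc_subset_Icc le_rfl hxL
  have hint2 : IntervalIntegrable f MeasureTheory.volume x Lx := by
    apply ContinuousOn.intervalIntegrable
    apply hf.mono
    rw [Set.uIcc_of_le hxL]
    exact Set.Icc_subset_Icc hx0 le_rfl
  have hFx0 : 0 ≤ F x := by
    rw [hF]
    apply intervalIntegral.integral_nonneg hx0
    intro t ht
    exact hfpos t ⟨ht.1, le_trans ht.2 hxL⟩
  have hFxΛ : F x ≤ Λ := by
    have hsplit : F x + ∫ t in x..Lx, f t = F Lx := by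
      rw [hF, hF]
      exact intervalIntegral.integral_add_adjacent_intervals hint1 hint2
    have htail : 0 ≤ ∫ t in x..Lx, f t := by
      apply intervalIntegral.integral_nonneg hxL
      intro t ht
      exact hfpos t ⟨le_trans hx0 ht.1, ht.2⟩
    rw [hΛ]
    linarith
  have hFLx : F Lx = Λ := hΛ.symm
  have key : c x - c Lx =
      (Λ - F x) * (γt * γa * ta - γt * H * d * (Λ + F x) / (2 * Vd)
        - γo * d - 2 * γv * d / Vd) := by
    rw [hc x, hc Lx, hFLx]
    field_simp
    ring
  have h1 : γt * H * d * (Λ + F x) / (2 * Vd) ≤ γt * H * Λ * d / Vd := by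
    rw [div_le_div_iff₀ (by positivity) hVd]
    nlinarith [mul_nonneg (sub_nonneg.2 hFxΛ)
      (mul_nonneg (mul_nonneg (mul_nonneg hγt.le hH.le) hd.le) hVd.le)]
  have hb : 0 ≤ γt * γa * ta - γt * H * d * (Λ + F x) / (2 * Vd)
      - γo * d - 2 * γv * d / Vd := by linarith
  nlinarith [mul_nonneg (sub_nonneg.2 hFxΛ) hb]
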